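/- Let H be a finite simple graph whose vertices carry label sets from {1,...,k}, let i ∈ {1,...,k} and S ⊆ {1,...,k}, and let H' = ρ_{i→S}(H) be the same graph in which the label i is replaced by the set S in the label set of every vertex carrying i. Then the [k]-labeled independent set polynomial P_{H'} is multilinear in x_1, ..., x_k and is congruent to the polynomial obtained from P_H by substituting the product ∏_{l∈S} x_l for x_i, modulo the ideal generated by x_1² − x_1, ..., x_k² − x_k. -/

import Mathlib

open MvPolynomial

/-- A finite set `S` of vertices is independent in `G`. -/
def IndepF {α : Type*} (G : SimpleGraph α) (S : Finset α) : Prop :=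
  ∀ u ∈ S, ∀ v ∈ S, ¬ G.Adj u v

open Classical in
/-- The `[k]`-labeled independent set polynomial of a labeled graph `(G, L)`:
`P(x, x₁, …, x_k) = Σ_S x^|S| ∏_{j ∈ ⋃_{v ∈ S} L v} x_j`,
where `S` ranges over the independent sets of `G` (including `∅`).
The variable `none` plays the role of `x`, and `some j` the role of `x_j`. -/
noncomputable def labIndepPoly {α : Type*} [Fintype α] {k : ℕ} (G : SimpleGraph α)
    (L : α → Finset (Fin k)) : MvPolynomial (Option (Fin k)) ℤ :=
  ∑ S ∈ Finset.univ.filter (fun S : Finset α => IndepF G S),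
    X none ^ S.card * ∏ j ∈ S.biUnion L, X (some j)

open Classical in
/-- The independent set polynomial `I(x) = Σ_i a_i x^i` of `G`, where `a_i` is the
number of independent sets of size `i` in `G` (with `a₀ = 1` for the empty set). -/
noncomputable def indepPoly {α : Type*} [Fintype α] (G : SimpleGraph α) : Polynomial ℤ :=
  ∑ i ∈ Finset.range (Fintype.card α + 1),
    Polynomial.C ((Finset.univ.filter
      (fun S : Finset α => IndepF G S ∧ S.card = i)).card : ℤ) * Polynomial.X ^ i

/-- A polynomial is multilinear in the label variables `x₁, …, x_k` if every monomial
has degree at most 1 in each `x_l`. -/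
def MultilinearInLabels {k : ℕ} (P : MvPolynomial (Option (Fin k)) ℤ) : Prop :=
  ∀ d ∈ P.support, ∀ l : Fin k, d (some l) ≤ 1

/-- The ideal generated by `x₁² − x₁, …, x_k² − x_k`. -/
noncomputable def squareIdeal (k : ℕ) : Ideal (MvPolynomial (Option (Fin k)) ℤ) :=
  Ideal.span (Set.range fun l : Fin k => X (some l) ^ 2 - X (some l))

/-- `ρ_{i→S}` on labelings: replace the label `i` by the set `S` in the label set of
every vertex carrying `i`. -/
def relabL {α : Type*} {k : ℕ} (L : α → Finset (Fin k)) (i : Fin k)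
    (S : Finset (Fin k)) : α → Finset (Fin k) :=
  fun v => if i ∈ L v then (L v).erase i ∪ S else L v

open Finset in
lemma prod_union_of_idem {M : Type*} [CommMonoid M] {ι : Type*} [DecidableEq ι]
    (g : ι → M) (h : ∀ j, g j * g j = g j) (A B : Finset ι) :
    ∏ j ∈ A ∪ B, g j = (∏ j ∈ A, g j) * ∏ j ∈ B, g j := by
  have habs : ∀ C D : Finset ι, D ⊆ C → (∏ j ∈ C, g j) * ∏ j ∈ D, g j = ∏ j ∈ C, g j := by
    intro C D hDC
    rw [← Finset.prod_sdiff hDC, mul_assoc, ← Finset.prod_mul_distrib]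
    simp [h]
  calc ∏ j ∈ A ∪ B, g j = (∏ j ∈ A ∪ B, g j) * ∏ j ∈ A ∩ B, g j :=
        (habs _ _ (Finset.inter_subset_union)).symm
    _ = (∏ j ∈ A, g j) * ∏ j ∈ B, g j := Finset.prod_union_inter

lemma prod_X_eq_monomial' {σ R : Type*} [CommSemiring R] [DecidableEq σ] {ι : Type*}
    (B : Finset ι) (f : ι → σ) :
    ∏ j ∈ B, (X (f j) : MvPolynomial σ R)
      = monomial (∑ j ∈ B, Finsupp.single (f j) 1) 1 := by
  classical
  induction B using Finset.induction with
  | empty => simp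
  | insert _ _ h ih =>
      rw [Finset.prod_insert h, Finset.sum_insert h, ih]
      rw [show (X (f _) : MvPolynomial σ R) = monomial (Finsupp.single (f _) 1) 1 from rfl,
        monomial_mul, one_mul]

open Classical in
lemma biUnion_relabL {α : Type*} {k : ℕ} (L : α → Finset (Fin k)) (i : Fin k)
    (S : Finset (Fin k)) (T : Finset α) :
    T.biUnion (relabL L i S)
      = if i ∈ T.biUnion L then (T.biUnion L).erase i ∪ S else T.biUnion L := by
  classical
  ext j
  simp only [Finset.mem_biUnion, relabL]
  split_ifs with hi
  · simp only [Finset.mem_union, Finset.mem_erase, Finset.mem_biUnion]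
    constructor
    · rintro ⟨v, hv, hj⟩
      by_cases hiv : i ∈ L v
      · rw [if_pos hiv] at hj
        rcases Finset.mem_union.1 hj with hj | hj
        · exact Or.inl ⟨(Finset.mem_erase.1 hj).1, v, hv, (Finset.mem_erase.1 hj).2⟩
        · exact Or.inr hj
      · rw [if_neg hiv] at hj
        exact Or.inl ⟨fun hji => hiv (hji ▸ hj), v, hv, hj⟩
    · rintro (⟨hne, v, hv, hj⟩ | hjS)
      · refine ⟨v, hv, ?_⟩
        by_cases hiv : i ∈ L v
        · rw [if_pos hiv]; exact Finset.mem_union_left _ (Finset.mem_erase.2 ⟨hne, hj⟩)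
        · rw [if_neg hiv]; exact hj
      · obtain ⟨v, hv, hiv⟩ := hi
        exact ⟨v, hv, by rw [if_pos hiv]; exact Finset.mem_union_right _ hjS⟩
  · simp only [Finset.mem_biUnion]
    constructor
    · rintro ⟨v, hv, hj⟩
      have hiv : i ∉ L v := fun h => hi ⟨v, hv, h⟩
      rw [if_neg hiv] at hj
      exact ⟨v, hv, hj⟩
    · rintro ⟨v, hv, hj⟩
      have hiv : i ∉ L v := fun h => hi ⟨v, hv, h⟩
      exact ⟨v, hv, by rw [if_neg hiv]; exact hj⟩

open Classical in
/-- For `H' = ρ_{i→S}(H)`, the `[k]`-labeled independent set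
polynomial of `H'` is multilinear in the label variables and is congruent, modulo the
ideal generated by the `x_l² − x_l`, to the polynomial obtained from that of `H` by
substituting `∏_{l ∈ S} x_l` for `x_i`. -/
theorem labIndepPoly_rho {α : Type*} [Fintype α] {k : ℕ} (H : SimpleGraph α)
    (L : α → Finset (Fin k)) (i : Fin k) (S : Finset (Fin k)) :
    MultilinearInLabels (labIndepPoly H (relabL L i S)) ∧
    labIndepPoly H (relabL L i S) -
        MvPolynomial.aeval
          (fun v : Option (Fin k) =>
            if v = some i then ∏ l ∈ S, X (some l) else X v)
          (labIndepPoly H L)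
      ∈ squareIdeal k := by
  classical
  constructor
  · intro d hd l
    rw [labIndepPoly, MvPolynomial.mem_support_iff, MvPolynomial.coeff_sum] at hd
    obtain ⟨T, hT, hcoeff⟩ := Finset.exists_ne_zero_of_sum_ne_zero hd
    set B := T.biUnion (relabL L i S) with hB
    have hmon : (X none ^ T.card * ∏ j ∈ B, X (some j) : MvPolynomial (Option (Fin k)) ℤ)
        = monomial (Finsupp.single none T.card + ∑ j ∈ B, Finsupp.single (some j) 1) 1 := by
      rw [X_pow_eq_monomial, prod_X_eq_monomial', monomial_mul, one_mul]
    rw [hmon, coeff_monomial] at hcoeff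
    have hd' : d = Finsupp.single none T.card + ∑ j ∈ B, Finsupp.single (some j) 1 := by
      by_contra h
      rw [if_neg (fun he => h he.symm)] at hcoeff
      exact hcoeff rfl
    subst hd'
    rw [Finsupp.add_apply, Finsupp.single_apply, if_neg (by simp), zero_add]
    rw [Finset.sum_apply']
    calc (∑ j ∈ B, Finsupp.single (some j : Option (Fin k)) 1 (some l))
        = ∑ j ∈ B, if j = l then 1 else 0 := by
          refine Finset.sum_congr rfl fun j _ => ?_
          rw [Finsupp.single_apply]
          simp
      _ ≤ 1 := by rw [Finset.sum_ite_eq' B l (fun _ => 1)]; split <;> simp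
  · rw [← Ideal.Quotient.eq]
    set q := Ideal.Quotient.mk (squareIdeal k) with hq
    have hidem : ∀ l : Fin k,
        q (X (some l)) * q (X (some l)) = q (X (some l)) := by
      intro l
      rw [← map_mul, ← pow_two, Ideal.Quotient.eq]
      exact Ideal.subset_span ⟨l, rfl⟩
    rw [labIndepPoly, labIndepPoly, map_sum, map_sum, map_sum]
    refine Finset.sum_congr rfl fun T _ => ?_
    simp only [map_mul, map_pow, map_prod, aeval_X, reduceCtorEq, if_false]
    congr 1
    rw [biUnion_relabL]
    by_cases hi : i ∈ T.biUnion L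
    · rw [if_pos hi, prod_union_of_idem _ hidem, ← Finset.mul_prod_erase _ _ hi, mul_comm]
      congr 1
      · rw [if_pos rfl, map_prod]
      · exact Finset.prod_congr rfl fun j hj =>
          by rw [if_neg (by simp [Finset.ne_of_mem_erase hj])]
    · rw [if_neg hi]
      refine Finset.prod_congr rfl fun j hj => ?_
      rw [if_neg (by simp only [Option.some.injEq]; exact fun h => hi (h ▸ hj))]
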